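/- Let G be a (2,2)-sparse multigraph with n vertices and m edges. Then the set of direction assignments d ∈ (ℝ²)^E for which the coefficient matrix of the realization system P(G,d) has rank m is the complement of the zero set of finitely many nonzero polynomials in the 2m coordinates of d; in particular this set is open and dense in ℝ^{2m}. -/

import Mathlib

/-!
STATEMENT 12: genericity of full rank for direction network realization systems.
Let G be a (2,2)-sparse multigraph with n vertices and m edges.  Then the set of
direction assignments d ∈ (ℝ²)^E for which the coefficient matrix of P(G,d) has rank m
is the complement of the zero set of finitely many nonzero polynomials in the 2m
coordinates of d; in particular this set is open and dense in ℝ^{2m}.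
-/

open MvPolynomial

/-- A multigraph. -/
structure MGraph (V E : Type) where
  ends : E → V × V
  ne : ∀ e, (ends e).1 ≠ (ends e).2

namespace MGraph

variable {V E : Type}

noncomputable def edgeCount (G : MGraph V E) (S : Finset V) : ℕ :=
  Nat.card {e : E // (G.ends e).1 ∈ S ∧ (G.ends e).2 ∈ S}

/-- `(2,2)`-sparsity. -/
def IsSparse22 (G : MGraph V E) : Prop :=
  ∀ S : Finset V, G.edgeCount S ≤ 2 * S.card - 2

end MGraph

/-- The coefficient matrix of the linear system `P(G,d)` (one row per edge, equation
`⟨p_i − p_j, d_e^⊥⟩ = 0`, i.e. `−d_e.2 (x_i − x_j) + d_e.1 (y_i − y_j) = 0`), the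
unknowns being the `2n` coordinates of `p`. -/
def coeffP {V E : Type} [DecidableEq V] (G : MGraph V E) (d : E → ℝ × ℝ) :
    Matrix E (V ⊕ V) ℝ := fun e col =>
  match col with
  | Sum.inl v =>
      if v = (G.ends e).1 then -(d e).2
      else if v = (G.ends e).2 then (d e).2 else 0
  | Sum.inr v =>
      if v = (G.ends e).1 then (d e).1
      else if v = (G.ends e).2 then -(d e).1 else 0

/-- The `2m` coordinates of a direction assignment `d ∈ (ℝ²)^E`. -/
def dirCoords {E : Type} (d : E → ℝ × ℝ) : E ⊕ E → ℝ :=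
  Sum.elim (fun e => (d e).1) (fun e => (d e).2)

namespace DirNet

open Finset

/-- rotate a vector by 90°. -/
def perp (D : ℝ × ℝ) : ℝ × ℝ := (-D.2, D.1)

section RowVec

variable {V : Type} [DecidableEq V]

/-- The row vector of an oriented edge `u → w` with direction `D`. -/
def rowVec (u w : V) (D : ℝ × ℝ) : (V ⊕ V) → ℝ :=
  Sum.elim (fun x => (if x = u then -D.2 else 0) + (if x = w then D.2 else 0))
           (fun x => (if x = u then D.1 else 0) + (if x = w then -D.1 else 0))

lemma rowVec_swap (u w : V) (D : ℝ × ℝ) : rowVec u w D = rowVec w u (-D) := by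
  funext col; rcases col with x | x <;> simp [rowVec] <;> ring

lemma rowVec_neg (u w : V) (D : ℝ × ℝ) : rowVec u w (-D) = - rowVec u w D := by
  funext col; rcases col with x | x <;> simp [rowVec] <;> split_ifs <;> ring

lemma rowVec_zero (u w : V) : rowVec u w (0 : ℝ × ℝ) = 0 := by
  funext col; rcases col with x | x <;> simp [rowVec]

lemma rowVec_add_sub (u a b : V) (D : ℝ × ℝ) :
    rowVec u a D + rowVec u b (-D) = rowVec b a D := by
  funext col; rcases col with x | x <;>
    simp only [rowVec, Pi.add_apply, Sum.elim_inl, Sum.elim_inr, Prod.fst_neg, Prod.snd_neg,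
      neg_neg] <;> split_ifs <;> ring

lemma coeffP_eq_rowVec {E : Type} (G : MGraph V E) (d : E → ℝ × ℝ) (e : E) :
    coeffP G d e = rowVec (G.ends e).1 (G.ends e).2 (d e) := by
  funext col
  rcases col with x | x
  · show (if x = (G.ends e).1 then -(d e).2 else if x = (G.ends e).2 then (d e).2 else 0) = _
    simp only [rowVec, Sum.elim_inl]
    rcases eq_or_ne x (G.ends e).1 with h1 | h1 <;> rcases eq_or_ne x (G.ends e).2 with h2 | h2 <;>
      simp [h1, h2, G.ne e, (G.ne e).symm]
  · show (if x = (G.ends e).1 then (d e).1 else if x = (G.ends e).2 then -(d e).1 else 0) = _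
    simp only [rowVec, Sum.elim_inr]
    rcases eq_or_ne x (G.ends e).1 with h1 | h1 <;> rcases eq_or_ne x (G.ends e).2 with h2 | h2 <;>
      simp [h1, h2, G.ne e, (G.ne e).symm]

end RowVec

section Counting

variable {V E : Type} [Fintype E] [DecidableEq V]

/-- The edges induced by `S`, as a `Finset`. -/
def edgeFinset (G : MGraph V E) (S : Finset V) : Finset E :=
  univ.filter (fun e => (G.ends e).1 ∈ S ∧ (G.ends e).2 ∈ S)

lemma edgeCount_eq (G : MGraph V E) (S : Finset V) :
    G.edgeCount S = (edgeFinset G S).card := by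
  rw [MGraph.edgeCount, Nat.card_eq_fintype_card, Fintype.card_subtype]
  rfl

lemma edgeCount_supermodular [DecidableEq E] (G : MGraph V E) (A B : Finset V) :
    G.edgeCount A + G.edgeCount B ≤ G.edgeCount (A ∪ B) + G.edgeCount (A ∩ B) := by
  simp only [edgeCount_eq]
  have h1 : edgeFinset G A ∪ edgeFinset G B ⊆ edgeFinset G (A ∪ B) := by
    intro e he
    simp only [edgeFinset, mem_filter, mem_union, mem_univ, true_and] at he ⊢
    tauto
  have h2 : edgeFinset G A ∩ edgeFinset G B = edgeFinset G (A ∩ B) := by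
    ext e
    simp only [edgeFinset, mem_filter, mem_inter, mem_univ, true_and]
    tauto
  calc (edgeFinset G A).card + (edgeFinset G B).card
      = (edgeFinset G A ∪ edgeFinset G B).card + (edgeFinset G A ∩ edgeFinset G B).card :=
        (card_union_add_card_inter _ _).symm
    _ ≤ (edgeFinset G (A ∪ B)).card + (edgeFinset G (A ∩ B)).card := by
        exact add_le_add (card_le_card h1) (le_of_eq (congrArg card h2))

lemma tight_union [DecidableEq E] {G : MGraph V E} (hs : G.IsSparse22) {A B : Finset V}
    (hA : G.edgeCount A + 2 = 2 * A.card) (hB : G.edgeCount B + 2 = 2 * B.card)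
    (hAB : (A ∩ B).Nonempty) :
    G.edgeCount (A ∪ B) + 2 = 2 * (A ∪ B).card := by
  have hsup := edgeCount_supermodular G A B
  have h1 := hs (A ∪ B)
  have h2 := hs (A ∩ B)
  have hi : 1 ≤ (A ∩ B).card := card_pos.mpr hAB
  have hcards := card_union_add_card_inter A B
  have hu : A.card ≤ (A ∪ B).card := card_le_card subset_union_left
  omega

/-- Add one extra edge between distinct vertices. -/
def addEdge (G : MGraph V E) (x y : V) (h : x ≠ y) : MGraph V (E ⊕ Unit) where
  ends := Sum.elim G.ends (fun _ => (x, y))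
  ne := by
    rintro (e | u)
    · exact G.ne e
    · exact h

lemma edgeCount_addEdge (G : MGraph V E) (x y : V) (h : x ≠ y) (S : Finset V) :
    (addEdge G x y h).edgeCount S
      = G.edgeCount S + (if x ∈ S ∧ y ∈ S then 1 else 0) := by
  classical
  rw [MGraph.edgeCount, MGraph.edgeCount,
    Nat.card_congr (Equiv.subtypeSum
      (p := fun c => ((addEdge G x y h).ends c).1 ∈ S ∧ ((addEdge G x y h).ends c).2 ∈ S)),
    Nat.card_sum]
  congr 1
  split_ifs with hxy
  · haveI : Unique {u : Unit //
        ((addEdge G x y h).ends (Sum.inr u)).1 ∈ S ∧ ((addEdge G x y h).ends (Sum.inr u)).2 ∈ S} :=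
      ⟨⟨⟨(), hxy⟩⟩, by rintro ⟨⟨⟩, _⟩; rfl⟩
    exact Nat.card_unique
  · haveI : IsEmpty {u : Unit //
        ((addEdge G x y h).ends (Sum.inr u)).1 ∈ S ∧ ((addEdge G x y h).ends (Sum.inr u)).2 ∈ S} :=
      ⟨fun u => hxy u.2⟩
    exact Nat.card_of_isEmpty

/-- Incidence of a vertex and an edge. -/
def inc (G : MGraph V E) (v : V) (e : E) : Prop :=
  (G.ends e).1 = v ∨ (G.ends e).2 = v

instance (G : MGraph V E) (v : V) : DecidablePred (inc G v) := fun e => by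
  unfold inc; infer_instance

/-- Delete a vertex (and all incident edges). -/
def delVert (G : MGraph V E) (v : V) : MGraph {u : V // u ≠ v} {e : E // ¬ inc G v e} where
  ends := fun e => (⟨(G.ends e.1).1, fun h => e.2 (Or.inl h)⟩,
                    ⟨(G.ends e.1).2, fun h => e.2 (Or.inr h)⟩)
  ne := fun e h => G.ne e.1 (congrArg Subtype.val h)

lemma edgeCount_delVert (G : MGraph V E) (v : V) (S : Finset {u : V // u ≠ v}) :
    (delVert G v).edgeCount S
      = G.edgeCount (S.map (Function.Embedding.subtype _)) := by
  rw [MGraph.edgeCount, MGraph.edgeCount]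
  apply Nat.card_congr
  refine
    { toFun := fun x => ⟨x.1.1, ?_, ?_⟩
      invFun := fun y => ⟨⟨y.1, ?_⟩, ?_, ?_⟩
      left_inv := ?_
      right_inv := ?_ }
  · rcases x with ⟨⟨e, he⟩, h1, h2⟩
    exact Finset.mem_map.2 ⟨_, h1, rfl⟩
  · rcases x with ⟨⟨e, he⟩, h1, h2⟩
    exact Finset.mem_map.2 ⟨_, h2, rfl⟩
  · -- the edge is not incident to v
    rcases y with ⟨e, h1, h2⟩
    rintro (h | h)
    · rw [Finset.mem_map] at h1
      obtain ⟨a, _, ha⟩ := h1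
      exact a.2 (by simp only [Function.Embedding.coe_subtype] at ha; rw [ha, h])
    · rw [Finset.mem_map] at h2
      obtain ⟨a, _, ha⟩ := h2
      exact a.2 (by simp only [Function.Embedding.coe_subtype] at ha; rw [ha, h])
  · rcases y with ⟨e, h1, h2⟩
    rw [Finset.mem_map] at h1
    obtain ⟨a, ha, ha'⟩ := h1
    simp only [Function.Embedding.coe_subtype] at ha'
    have : a = ⟨(G.ends e).1, by rw [← ha']; exact a.2⟩ := Subtype.ext ha'
    rwa [this] at ha
  · rcases y with ⟨e, h1, h2⟩
    rw [Finset.mem_map] at h2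
    obtain ⟨a, ha, ha'⟩ := h2
    simp only [Function.Embedding.coe_subtype] at ha'
    have : a = ⟨(G.ends e).2, by rw [← ha']; exact a.2⟩ := Subtype.ext ha'
    rwa [this] at ha
  · rintro ⟨⟨e, he⟩, h1, h2⟩; rfl
  · rintro ⟨e, h1, h2⟩; rfl

lemma sparse_delVert {G : MGraph V E} (hs : G.IsSparse22) (v : V) :
    (delVert G v).IsSparse22 := by
  intro S
  rw [edgeCount_delVert]
  have := hs (S.map (Function.Embedding.subtype _))
  rwa [Finset.card_map] at this

end Counting

end DirNet

section LinAlg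

open Matrix

variable {E F : Type} [Fintype E] [Fintype F] [DecidableEq E]

lemma rank_eq_card_iff_rows (M : Matrix E F ℝ) :
    M.rank = Fintype.card E ↔ LinearIndependent ℝ (fun e => M e) := by
  constructor
  · intro h
    rw [linearIndependent_iff_card_eq_finrank_span, Set.finrank]
    rw [show (fun e => M e) = M.row from rfl, ← Matrix.rank_eq_finrank_span_row, h]
  · intro h
    exact h.rank_matrix

lemma linearIndependent_of_det_ne_zero {M : Matrix E F ℝ} {c : E → F}
    (h : (M.submatrix id c).det ≠ 0) : LinearIndependent ℝ (fun e => M e) := by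
  have hsub : LinearIndependent ℝ (fun e => (M.submatrix id c) e) :=
    Matrix.linearIndependent_rows_iff_isUnit.mpr
      ((Matrix.isUnit_iff_isUnit_det _).mpr (isUnit_iff_ne_zero.mpr h))
  exact LinearIndependent.of_comp (LinearMap.funLeft ℝ ℝ c) hsub

lemma exists_det_ne_zero_of_linearIndependent {M : Matrix E F ℝ}
    (h : LinearIndependent ℝ (fun e => M e)) :
    ∃ c : E → F, (M.submatrix id c).det ≠ 0 := by
  classical
  have hrank : M.rank = Fintype.card E := h.rank_matrix
  have hspan : Submodule.span ℝ (Set.range Mᵀ) = ⊤ := by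
    apply Submodule.eq_top_of_finrank_eq
    show Module.finrank ℝ (Submodule.span ℝ (Set.range M.col)) = _
    rw [← Matrix.rank_eq_finrank_span_cols, hrank, Module.finrank_fintype_fun_eq_card]
  obtain ⟨t, htsub, htspan, htli⟩ := exists_linearIndependent ℝ (Set.range Mᵀ)
  rw [hspan] at htspan
  have htfin : t.Finite := Set.Finite.subset (Set.finite_range Mᵀ) htsub
  haveI : Fintype t := htfin.fintype
  let b : Module.Basis t ℝ (E → ℝ) := Module.Basis.mk htli (by rw [Subtype.range_coe, htspan])
  have hcard : Fintype.card E = Fintype.card t := by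
    rw [← Module.finrank_eq_card_basis b, Module.finrank_fintype_fun_eq_card]
  obtain ⟨ψ⟩ := Fintype.card_eq.mp hcard
  choose cf hcf using fun u : t => htsub u.2
  refine ⟨fun e => cf (ψ e), ?_⟩
  rw [← isUnit_iff_ne_zero, ← Matrix.isUnit_iff_isUnit_det,
    ← Matrix.linearIndependent_cols_iff_isUnit]
  have hcols : (fun e => (M.submatrix id (fun e' => cf (ψ e')))ᵀ e)
      = fun e => ((ψ e : t) : E → ℝ) := by
    funext e
    have := hcf (ψ e)
    ext e'
    simp only [Matrix.transpose_apply, Matrix.submatrix_apply, id]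
    rw [← congrFun this e']
    rfl
  show LinearIndependent ℝ (fun e => (M.submatrix id (fun e' => cf (ψ e')))ᵀ e)
  rw [hcols]
  exact htli.comp ψ ψ.injective

end LinAlg

section PolyTopo

open Polynomial in
/-- Away from the zero locus of a nonzero multivariate polynomial is dense. -/
lemma dense_eval_ne_zero {σ : Type} {f : MvPolynomial σ ℝ} (hf : f ≠ 0) :
    Dense {x : σ → ℝ | MvPolynomial.eval x f ≠ 0} := by
  rw [dense_iff_inter_open]
  rintro U hU ⟨x, hxU⟩
  obtain ⟨z, hz⟩ : ∃ z : σ → ℝ, MvPolynomial.eval z f ≠ 0 := by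
    by_contra hc
    push_neg at hc
    exact hf (MvPolynomial.funext fun y => by rw [hc y, map_zero])
  set φ : ℝ → σ → ℝ := fun t i => x i + t * (z i - x i) with hφ
  have hcont : Continuous φ := by
    apply continuous_pi
    intro i
    fun_prop
  set p : Polynomial ℝ :=
    MvPolynomial.eval₂ (Polynomial.C : ℝ →+* Polynomial ℝ)
      (fun i => Polynomial.C (x i) + Polynomial.X * Polynomial.C (z i - x i)) f with hp
  have hpeval : ∀ t : ℝ, p.eval t = MvPolynomial.eval (φ t) f := by
    intro t
    have := MvPolynomial.eval₂_comp_left (Polynomial.evalRingHom t)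
      (Polynomial.C : ℝ →+* Polynomial ℝ)
      (fun i => Polynomial.C (x i) + Polynomial.X * Polynomial.C (z i - x i)) f
    simp only [Polynomial.coe_evalRingHom] at this
    rw [hp]
    rw [this]
    have h1 : (Polynomial.evalRingHom t).comp (Polynomial.C : ℝ →+* Polynomial ℝ)
        = RingHom.id ℝ := by
      ext a; simp
    rw [h1]
    have h2 : ((fun g => Polynomial.eval t g) ∘
        fun i => Polynomial.C (x i) + Polynomial.X * Polynomial.C (z i - x i)) = φ t := by
      funext i; simp [hφ]
    rw [h2]
    rw [MvPolynomial.eval]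
    rfl
  have hp1 : p.eval 1 ≠ 0 := by
    rw [hpeval]
    have : φ 1 = z := by funext i; simp [hφ]
    rwa [this]
  have hpne : p ≠ 0 := fun h0 => hp1 (by rw [h0]; simp)
  have hroots : {t : ℝ | p.IsRoot t}.Finite := p.finite_setOf_isRoot hpne
  have hW : IsOpen (φ ⁻¹' U) := hU.preimage hcont
  have h0W : (0 : ℝ) ∈ φ ⁻¹' U := by
    have : φ 0 = x := by funext i; simp [hφ]
    simpa [this] using hxU
  have hWinf : (φ ⁻¹' U).Infinite := infinite_of_mem_nhds (0 : ℝ) (hW.mem_nhds h0W)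
  obtain ⟨t, htW, htr⟩ := (hWinf.diff hroots).nonempty
  exact ⟨φ t, htW, fun h => htr (by rw [Set.mem_setOf_eq, Polynomial.IsRoot, hpeval]; exact h)⟩

/-- `dirCoords` as a homeomorphism. -/
def dirHomeo (E : Type) [Fintype E] : (E → ℝ × ℝ) ≃ₜ ((E ⊕ E) → ℝ) where
  toFun := dirCoords
  invFun x e := (x (Sum.inl e), x (Sum.inr e))
  left_inv d := rfl
  right_inv x := by funext i; cases i <;> rfl
  continuous_toFun := by
    apply continuous_pi
    rintro (e | e)
    · exact (continuous_apply e).fst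
    · exact (continuous_apply e).snd
  continuous_invFun := by
    apply continuous_pi
    intro e
    exact (continuous_apply (Sum.inl e)).prodMk (continuous_apply (Sum.inr e))

end PolyTopo

namespace DirNet

open Finset

lemma sq_pair_eq_zero {D : ℝ × ℝ} (h : D.1 * D.1 + D.2 * D.2 = 0) : D = 0 := by
  have h1 : D.1 * D.1 = 0 := by nlinarith [mul_self_nonneg D.1, mul_self_nonneg D.2]
  have h2 : D.2 * D.2 = 0 := by nlinarith [mul_self_nonneg D.1, mul_self_nonneg D.2]
  exact Prod.ext_iff.mpr ⟨mul_self_eq_zero.mp h1, mul_self_eq_zero.mp h2⟩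

lemma exists_good_dir (n : ℕ) :
    ∀ (V E : Type) [Fintype V] [Fintype E] [DecidableEq V] [DecidableEq E],
      Fintype.card V ≤ n → ∀ (G : MGraph V E), G.IsSparse22 →
      ∃ d : E → ℝ × ℝ,
        LinearIndependent ℝ (fun e => rowVec (G.ends e).1 (G.ends e).2 (d e)) := by
  induction n with
  | zero =>
    intro V E _ _ _ _ hcard G hs
    haveI : IsEmpty V := Fintype.card_eq_zero_iff.mp (le_antisymm hcard (Nat.zero_le _))
    haveI : IsEmpty E := ⟨fun e => IsEmpty.false (G.ends e).1⟩
    exact ⟨fun _ => 0, linearIndependent_empty_type⟩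
  | succ n IH =>
    intro V E _ _ _ _ hcard G hs
    by_cases hVn : Fintype.card V ≤ n
    · exact IH V E hVn G hs
    have hV1 : 1 ≤ Fintype.card V := by omega
    haveI : Nonempty V := Fintype.card_pos_iff.mp hV1
    -- a vertex of degree at most 3
    obtain ⟨v, hv3⟩ : ∃ v : V, (univ.filter (inc G v)).card ≤ 3 := by
      by_contra hcon
      push_neg at hcon
      have hhand : ∑ v : V, (univ.filter (inc G v)).card = 2 * Fintype.card E := by
        have h1 : ∀ v : V, (univ.filter (inc G v)).card
            = ∑ e : E, (if inc G v e then 1 else 0) := by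
          intro v; rw [Finset.card_filter]
        simp_rw [h1]
        rw [Finset.sum_comm]
        have h2 : ∀ e : E, (∑ v : V, if inc G v e then 1 else 0) = 2 := by
          intro e
          rw [← Finset.card_filter]
          have : (univ.filter (fun v => inc G v e))
              = {(G.ends e).1, (G.ends e).2} := by
            ext w
            simp only [mem_filter, mem_univ, true_and, mem_insert, mem_singleton]
            simp only [inc]
            constructor
            · rintro (h | h) <;> [exact Or.inl h.symm; exact Or.inr h.symm]
            · rintro (h | h) <;> [exact Or.inl h.symm; exact Or.inr h.symm]
          rw [this, Finset.card_pair (G.ne e)]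
        simp_rw [h2]
        rw [Finset.sum_const, Finset.card_univ, smul_eq_mul, mul_comm]
      have hEb := hs univ
      rw [edgeCount_eq] at hEb
      have hEeq : edgeFinset G univ = univ := by
        ext e; simp [edgeFinset]
      rw [hEeq, Finset.card_univ] at hEb
      have h4 : 4 * Fintype.card V ≤ ∑ v : V, (univ.filter (inc G v)).card := by
        calc 4 * Fintype.card V = ∑ _v : V, 4 := by
              rw [Finset.sum_const, Finset.card_univ, smul_eq_mul, mul_comm]
          _ ≤ _ := Finset.sum_le_sum (fun v _ => hcon v)
      rw [hhand] at h4
      have hcuniv := Finset.card_univ (α := V)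
      omega
    set I : Finset E := univ.filter (inc G v) with hI
    have hmemI : ∀ e : E, e ∈ I ↔ inc G v e := fun e => by rw [hI]; simp
    -- other endpoint and sign
    set oth : E → V := fun e => if (G.ends e).1 = v then (G.ends e).2 else (G.ends e).1 with hoth
    set ε : E → ℝ := fun e => if (G.ends e).1 = v then 1 else -1 with hε
    have hoth_ne : ∀ e : E, oth e ≠ v := by
      intro e
      by_cases hf : (G.ends e).1 = v
      · simp only [hoth, if_pos hf]
        exact fun hh => G.ne e (hf.trans hh.symm)
      · simp only [hoth, if_neg hf]
        exact hf
    have hε_sq : ∀ (e : E) (X : ℝ × ℝ), ε e • ε e • X = X := by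
      intro e X
      simp only [hε]
      split_ifs <;> norm_num [smul_smul]
    have hrow_at_v : ∀ (e : E) (X : ℝ × ℝ), inc G v e →
        rowVec (G.ends e).1 (G.ends e).2 X (Sum.inl v) = -(ε e • X).2 ∧
        rowVec (G.ends e).1 (G.ends e).2 X (Sum.inr v) = (ε e • X).1 := by
      intro e X he
      by_cases hf : (G.ends e).1 = v
      · have hsnd : ¬ (v = (G.ends e).2) := fun hh => G.ne e (hf.trans hh)
        have hfst : v = (G.ends e).1 := hf.symm
        constructor <;> simp [rowVec, hε, hfst, G.ne e]
      · have hsnd : (G.ends e).2 = v := he.resolve_left hf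
        have h1 : ¬ (v = (G.ends e).1) := fun hh => hf hh.symm
        have h2 : v = (G.ends e).2 := hsnd.symm
        constructor <;> simp [rowVec, h1, ← h2, hε, hf]
    have hrow_nonv : ∀ (e : E) (X : ℝ × ℝ), ¬ inc G v e →
        rowVec (G.ends e).1 (G.ends e).2 X (Sum.inl v) = 0 ∧
        rowVec (G.ends e).1 (G.ends e).2 X (Sum.inr v) = 0 := by
      intro e X he
      rw [inc, not_or] at he
      have h1 : ¬ (v = (G.ends e).1) := fun hh => he.1 hh.symm
      have h2 : ¬ (v = (G.ends e).2) := fun hh => he.2 hh.symm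
      constructor <;> simp [rowVec, h1, h2]
    have hrow_canon : ∀ (e : E) (X : ℝ × ℝ), inc G v e →
        rowVec (G.ends e).1 (G.ends e).2 X = rowVec v (oth e) (ε e • X) := by
      intro e X he
      by_cases hf : (G.ends e).1 = v
      · simp only [hoth, hε, if_pos hf]
        rw [hf, one_smul]
      · have hsnd : (G.ends e).2 = v := he.resolve_left hf
        simp only [hoth, hε, if_neg hf]
        rw [neg_one_smul, ← hsnd]
        exact rowVec_swap _ _ _
    -- the key two-column extraction
    have hkey : ∀ (d : E → ℝ × ℝ) (g : E → ℝ),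
        (∑ e : E, g e • rowVec (G.ends e).1 (G.ends e).2 (d e)) = 0 →
        (∑ e ∈ I, g e • perp (ε e • d e)) = 0 := by
      intro d g hsum
      have h1 : (∑ e : E, g e * rowVec (G.ends e).1 (G.ends e).2 (d e) (Sum.inl v)) = 0 := by
        have := congrFun hsum (Sum.inl v)
        simpa [Finset.sum_apply, smul_eq_mul] using this
      have h2 : (∑ e : E, g e * rowVec (G.ends e).1 (G.ends e).2 (d e) (Sum.inr v)) = 0 := by
        have := congrFun hsum (Sum.inr v)
        simpa [Finset.sum_apply, smul_eq_mul] using this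
      have h1' : (∑ e ∈ I, g e * (perp (ε e • d e)).1) = 0 := by
        calc (∑ e ∈ I, g e * (perp (ε e • d e)).1)
            = ∑ e ∈ I, g e * rowVec (G.ends e).1 (G.ends e).2 (d e) (Sum.inl v) := by
              refine Finset.sum_congr rfl (fun e he => ?_)
              rw [(hrow_at_v e (d e) ((hmemI e).mp he)).1]
              rfl
          _ = ∑ e : E, g e * rowVec (G.ends e).1 (G.ends e).2 (d e) (Sum.inl v) :=
              Finset.sum_subset (Finset.subset_univ I) (fun e _ hne => by
                rw [(hrow_nonv e (d e) (fun hi => hne ((hmemI e).mpr hi))).1, mul_zero])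
          _ = 0 := h1
      have h2' : (∑ e ∈ I, g e * (perp (ε e • d e)).2) = 0 := by
        calc (∑ e ∈ I, g e * (perp (ε e • d e)).2)
            = ∑ e ∈ I, g e * rowVec (G.ends e).1 (G.ends e).2 (d e) (Sum.inr v) := by
              refine Finset.sum_congr rfl (fun e he => ?_)
              rw [(hrow_at_v e (d e) ((hmemI e).mp he)).2]
              rfl
          _ = ∑ e : E, g e * rowVec (G.ends e).1 (G.ends e).2 (d e) (Sum.inr v) :=
              Finset.sum_subset (Finset.subset_univ I) (fun e _ hne => by
                rw [(hrow_nonv e (d e) (fun hi => hne ((hmemI e).mpr hi))).2, mul_zero])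
          _ = 0 := h2
      refine Prod.ext_iff.mpr ⟨?_, ?_⟩
      · rw [Prod.fst_sum]
        simpa [smul_eq_mul] using h1'
      · rw [Prod.snd_sum]
        simpa [smul_eq_mul] using h2'
    -- the restriction map
    have hcardV' : Fintype.card {u : V // u ≠ v} ≤ n := by
      have h1 : Fintype.card {u : V // u ≠ v} = Fintype.card V - 1 := by
        rw [Fintype.card_subtype_compl, Fintype.card_subtype_eq]
      omega
    set ρ : ((V ⊕ V) → ℝ) →ₗ[ℝ] (({u : V // u ≠ v} ⊕ {u : V // u ≠ v}) → ℝ) :=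
      LinearMap.funLeft ℝ ℝ (Sum.map Subtype.val Subtype.val) with hρ
    have hρ_rowVec : ∀ (u w : V) (hu : u ≠ v) (hw : w ≠ v) (D : ℝ × ℝ),
        ρ (rowVec u w D) = rowVec (⟨u, hu⟩ : {u : V // u ≠ v}) ⟨w, hw⟩ D := by
      intro u w hu hw D
      funext col
      rcases col with x | x <;>
        simp [hρ, LinearMap.funLeft_apply, rowVec, Subtype.ext_iff]
    have hG0 : (delVert G v).IsSparse22 := sparse_delVert hs v
    have hends_mem : ∀ (e : E), inc G v e → ∀ (S : Finset V), v ∈ S → oth e ∈ S →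
        (G.ends e).1 ∈ S ∧ (G.ends e).2 ∈ S := by
      intro e he S hvS hoS
      by_cases hf : (G.ends e).1 = v
      · refine ⟨by rw [hf]; exact hvS, ?_⟩
        have : oth e = (G.ends e).2 := by simp only [hoth, if_pos hf]
        rwa [this] at hoS
      · have hsnd : (G.ends e).2 = v := he.resolve_left hf
        refine ⟨?_, by rw [hsnd]; exact hvS⟩
        have : oth e = (G.ends e).1 := by simp only [hoth, if_neg hf]
        rwa [this] at hoS
    by_cases hI2 : I.card ≤ 2
    · -- CASE A : at most two incident edges
      obtain ⟨d', hd'⟩ := IH {u : V // u ≠ v} {e : E // ¬ inc G v e} hcardV' (delVert G v) hG0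
      obtain ⟨emb⟩ : Nonempty ({e : E // e ∈ I} ↪ Fin 2) :=
        Function.Embedding.nonempty_of_card_le (by simpa using hI2)
      obtain ⟨d, hdI, hdnin⟩ :
          ∃ d : E → ℝ × ℝ,
            (∀ e (h : e ∈ I), d e = ε e • (![((1:ℝ),(0:ℝ)), (0,1)]) (emb ⟨e, h⟩)) ∧
            (∀ e (h : ¬ inc G v e), d e = d' ⟨e, h⟩) := by
        refine ⟨fun e => if h : e ∈ I then ε e • (![((1:ℝ),(0:ℝ)), (0,1)]) (emb ⟨e, h⟩)
          else d' ⟨e, fun hi => h ((hmemI e).mpr hi)⟩, fun e h => dif_pos h, fun e h => ?_⟩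
        exact dif_neg (fun hi => h ((hmemI e).mp hi))
      refine ⟨d, Fintype.linearIndependent_iff.mpr ?_⟩
      intro g hsum
      have hIzero : ∀ e ∈ I, g e = 0 := by
        have h0 := hkey d g hsum
        have hterm : ∀ (e : E) (he : e ∈ I),
            perp (ε e • d e) = (![((0:ℝ),(1:ℝ)), (-1, 0)]) (emb ⟨e, he⟩) := by
          intro e he
          rw [hdI e he, hε_sq]
          have hpp : ∀ j : Fin 2, perp ((![((1:ℝ),(0:ℝ)), (0,1)]) j)
              = (![((0:ℝ),(1:ℝ)), (-1, 0)]) j := by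
            rw [Fin.forall_fin_two]
            constructor <;> simp [perp]
          exact hpp _
        have hli : LinearIndependent ℝ (![((0:ℝ),(1:ℝ)), (-1, 0)]) := by
          rw [linearIndependent_fin2]
          constructor
          · intro h
            have := congrArg Prod.fst h
            norm_num at this
          · intro a h
            have := congrArg Prod.snd h
            simp [Prod.smul_mk] at this
        have hcomp : LinearIndependent ℝ
            (fun x : {e : E // e ∈ I} => (![((0:ℝ),(1:ℝ)), (-1, 0)]) (emb x)) :=
          hli.comp emb emb.injective
        have h0' : (∑ x ∈ I.attach, g x.1 • (![((0:ℝ),(1:ℝ)), (-1, 0)]) (emb x)) = 0 := by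
          rw [← Finset.sum_attach I (fun e => g e • perp (ε e • d e))] at h0
          calc (∑ x ∈ I.attach, g x.1 • (![((0:ℝ),(1:ℝ)), (-1, 0)]) (emb x))
              = ∑ x ∈ I.attach, g x.1 • perp (ε x.1 • d x.1) :=
                Finset.sum_congr rfl (fun x _ => by rw [hterm x.1 x.2])
            _ = 0 := h0
        have hall := Fintype.linearIndependent_iff.mp hcomp (fun x => g x.1)
          (by rw [Finset.univ_eq_attach]; exact h0')
        intro e he
        exact hall ⟨e, he⟩
      have hρsum := congrArg ρ hsum
      rw [map_sum, map_zero] at hρsum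
      simp_rw [map_smul] at hρsum
      rw [← Finset.sum_filter_add_sum_filter_not univ (fun e => inc G v e)] at hρsum
      have hpart1 : (∑ e ∈ univ.filter (fun e => inc G v e),
          g e • ρ (rowVec (G.ends e).1 (G.ends e).2 (d e))) = 0 := by
        refine Finset.sum_eq_zero (fun e he => ?_)
        rw [hIzero e (by rw [hI]; exact he), zero_smul]
      rw [hpart1, zero_add] at hρsum
      have hpart2 : (∑ e ∈ univ.filter (fun e => ¬ inc G v e),
            g e • ρ (rowVec (G.ends e).1 (G.ends e).2 (d e)))
          = ∑ x : {e : E // ¬ inc G v e}, g x.1 •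
              rowVec (((delVert G v).ends x).1) (((delVert G v).ends x).2) (d' x) := by
        have h1 : (∑ e ∈ univ.filter (fun e => ¬ inc G v e),
              g e • ρ (rowVec (G.ends e).1 (G.ends e).2 (d e)))
            = ∑ x : {e : E // ¬ inc G v e},
                g x.1 • ρ (rowVec (G.ends x.1).1 (G.ends x.1).2 (d x.1)) :=
          Finset.sum_subtype _ (fun e => by simp) _
        rw [h1]
        refine Finset.sum_congr rfl (fun x _ => ?_)
        rw [hdnin x.1 x.2, hρ_rowVec _ _ (fun h => x.2 (Or.inl h)) (fun h => x.2 (Or.inr h))]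
        rfl
      rw [hpart2] at hρsum
      have hzero' := Fintype.linearIndependent_iff.mp hd' (fun x => g x.1) hρsum
      intro e
      by_cases he : e ∈ I
      · exact hIzero e he
      · exact hzero' ⟨e, fun hi => he ((hmemI e).mpr hi)⟩
    · -- CASE B : exactly three incident edges
      have hI3 : I.card = 3 := by omega
      obtain ⟨e1, e2, e3, h12, h13, h23, hIeq3⟩ := Finset.card_eq_three.mp hI3
      have hinc1 : inc G v e1 := (hmemI e1).mp (by rw [hIeq3]; simp)
      have hinc2 : inc G v e2 := (hmemI e2).mp (by rw [hIeq3]; simp)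
      have hinc3 : inc G v e3 := (hmemI e3).mp (by rw [hIeq3]; simp)
      have hdich : ∀ x y : {u : V // u ≠ v},
          (∃ S : Finset {u : V // u ≠ v}, x ∈ S ∧ y ∈ S ∧
            (delVert G v).edgeCount S + 2 = 2 * S.card) ∨
          (∀ S : Finset {u : V // u ≠ v}, x ∈ S → y ∈ S →
            (delVert G v).edgeCount S + 3 ≤ 2 * S.card) := by
        intro x y
        by_cases hok : ∀ S : Finset {u : V // u ≠ v}, x ∈ S → y ∈ S →
            (delVert G v).edgeCount S + 3 ≤ 2 * S.card
        · exact Or.inr hok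
        · left
          push_neg at hok
          obtain ⟨S, hxS, hyS, hS⟩ := hok
          refine ⟨S, hxS, hyS, ?_⟩
          have h1 := hG0 S
          have hc1 : 1 ≤ S.card := Finset.card_pos.mpr ⟨x, hxS⟩
          omega
      have hc3 : ({e1, e2, e3} : Finset E).card = 3 := by
        rw [Finset.card_insert_of_notMem (by simp [h12, h13]),
          Finset.card_insert_of_notMem (by simp [h23]), Finset.card_singleton]
      have hno_tight : ∀ T : Finset {u : V // u ≠ v},
          (⟨oth e1, hoth_ne e1⟩ : {u : V // u ≠ v}) ∈ T →
          (⟨oth e2, hoth_ne e2⟩ : {u : V // u ≠ v}) ∈ T →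
          (⟨oth e3, hoth_ne e3⟩ : {u : V // u ≠ v}) ∈ T →
          (delVert G v).edgeCount T + 2 = 2 * T.card → False := by
        intro T h1 h2 h3 htight
        have hvT : v ∉ T.map (Function.Embedding.subtype _) := by
          rw [Finset.mem_map]
          rintro ⟨a, _, ha⟩
          exact a.2 (by simpa using ha)
        have hmemo : ∀ (e : E), inc G v e →
            (⟨oth e, hoth_ne e⟩ : {u : V // u ≠ v}) ∈ T →
            e ∈ edgeFinset G (insert v (T.map (Function.Embedding.subtype _))) := by
          intro e he hoT
          have hoTm : oth e ∈ T.map (Function.Embedding.subtype _) := by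
            rw [Finset.mem_map]
            exact ⟨⟨oth e, hoth_ne e⟩, hoT, rfl⟩
          have := hends_mem e he (insert v (T.map (Function.Embedding.subtype _)))
            (Finset.mem_insert_self _ _) (Finset.mem_insert_of_mem hoTm)
          simp only [edgeFinset, Finset.mem_filter, Finset.mem_univ, true_and]
          exact this
        have hsub1 : edgeFinset G (T.map (Function.Embedding.subtype _))
            ⊆ edgeFinset G (insert v (T.map (Function.Embedding.subtype _))) := by
          intro e he
          simp only [edgeFinset, Finset.mem_filter, Finset.mem_univ, true_and] at he ⊢
          exact ⟨Finset.mem_insert_of_mem he.1, Finset.mem_insert_of_mem he.2⟩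
        have hdisj : Disjoint (edgeFinset G (T.map (Function.Embedding.subtype _)))
            ({e1, e2, e3} : Finset E) := by
          rw [Finset.disjoint_right]
          intro a ha hmem
          simp only [edgeFinset, Finset.mem_filter, Finset.mem_univ, true_and] at hmem
          have hainc : inc G v a := by
            rcases Finset.mem_insert.mp ha with h | h
            · rw [h]; exact hinc1
            · rcases Finset.mem_insert.mp h with h' | h'
              · rw [h']; exact hinc2
              · rw [Finset.mem_singleton.mp h']; exact hinc3
          rcases hainc with h | h
          · exact hvT (h ▸ hmem.1)
          · exact hvT (h ▸ hmem.2)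
        have hsub2 : edgeFinset G (T.map (Function.Embedding.subtype _)) ∪ {e1, e2, e3}
            ⊆ edgeFinset G (insert v (T.map (Function.Embedding.subtype _))) := by
          refine Finset.union_subset hsub1 ?_
          intro a ha
          rcases Finset.mem_insert.mp ha with h | h
          · rw [h]; exact hmemo e1 hinc1 h1
          · rcases Finset.mem_insert.mp h with h' | h'
            · rw [h']; exact hmemo e2 hinc2 h2
            · rw [Finset.mem_singleton.mp h']; exact hmemo e3 hinc3 h3
        have hup := Finset.card_le_card hsub2
        rw [Finset.card_union_of_disjoint hdisj, hc3] at hup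
        have hGS := hs (insert v (T.map (Function.Embedding.subtype _)))
        rw [edgeCount_eq] at hGS
        have hTcount : (delVert G v).edgeCount T
            = (edgeFinset G (T.map (Function.Embedding.subtype _))).card := by
          rw [edgeCount_delVert, edgeCount_eq]
        have hcS : (insert v (T.map (Function.Embedding.subtype _))).card = T.card + 1 := by
          rw [Finset.card_insert_of_notMem hvT, Finset.card_map]
        omega
      have hall_ne : ¬ (oth e1 = oth e2 ∧ oth e1 = oth e3) := by
        rintro ⟨h12a, h13a⟩
        have hgen : ∀ e : E, inc G v e → oth e ∈ ({v, oth e1} : Finset V) →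
            e ∈ edgeFinset G {v, oth e1} := by
          intro e he hoe
          have := hends_mem e he {v, oth e1} (Finset.mem_insert_self _ _) hoe
          simp only [edgeFinset, Finset.mem_filter, Finset.mem_univ, true_and]
          exact this
        have hsub : ({e1, e2, e3} : Finset E) ⊆ edgeFinset G {v, oth e1} := by
          intro a ha
          rcases Finset.mem_insert.mp ha with h | h
          · rw [h]; exact hgen e1 hinc1 (by simp)
          · rcases Finset.mem_insert.mp h with h' | h'
            · rw [h']; exact hgen e2 hinc2 (by simp [h12a.symm])
            · rw [Finset.mem_singleton.mp h']; exact hgen e3 hinc3 (by simp [h13a.symm])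
        have h3le := Finset.card_le_card hsub
        rw [hc3] at h3le
        have hsp := hs {v, oth e1}
        rw [edgeCount_eq] at hsp
        have hc2 : ({v, oth e1} : Finset V).card ≤ 2 :=
          (Finset.card_insert_le _ _).trans (by simp)
        omega
      obtain ⟨i, j, k, hij, hik, hjk, hIeq, haij, hOK⟩ :
          ∃ i j k : E, i ≠ j ∧ i ≠ k ∧ j ≠ k ∧ I = {i, j, k} ∧ oth i ≠ oth j ∧
            (∀ S : Finset {u : V // u ≠ v},
              (⟨oth i, hoth_ne i⟩ : {u : V // u ≠ v}) ∈ S →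
              (⟨oth j, hoth_ne j⟩ : {u : V // u ≠ v}) ∈ S →
              (delVert G v).edgeCount S + 3 ≤ 2 * S.card) := by
        have hIperm1 : I = {e1, e3, e2} := by
          rw [hIeq3]; ext a; simp; tauto
        have hIperm2 : I = {e2, e3, e1} := by
          rw [hIeq3]; ext a; simp; tauto
        by_cases ha12 : oth e1 = oth e2
        · have ha13 : oth e1 ≠ oth e3 := fun h => hall_ne ⟨ha12, h⟩
          refine ⟨e1, e3, e2, h13, h12, Ne.symm h23, hIperm1, ha13, ?_⟩
          rcases hdich ⟨oth e1, hoth_ne e1⟩ ⟨oth e3, hoth_ne e3⟩ with ⟨S, hS1, hS3, ht⟩ | hok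
          · have hS2 : (⟨oth e2, hoth_ne e2⟩ : {u : V // u ≠ v}) ∈ S := by
              rw [show (⟨oth e2, hoth_ne e2⟩ : {u : V // u ≠ v}) = ⟨oth e1, hoth_ne e1⟩
                from Subtype.ext ha12.symm]
              exact hS1
            exact (hno_tight S hS1 hS2 hS3 ht).elim
          · exact hok
        · by_cases ha13 : oth e1 = oth e3
          · refine ⟨e1, e2, e3, h12, h13, h23, hIeq3, ha12, ?_⟩
            rcases hdich ⟨oth e1, hoth_ne e1⟩ ⟨oth e2, hoth_ne e2⟩ with ⟨S, hS1, hS2, ht⟩ | hok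
            · have hS3 : (⟨oth e3, hoth_ne e3⟩ : {u : V // u ≠ v}) ∈ S := by
                rw [show (⟨oth e3, hoth_ne e3⟩ : {u : V // u ≠ v}) = ⟨oth e1, hoth_ne e1⟩
                  from Subtype.ext ha13.symm]
                exact hS1
              exact (hno_tight S hS1 hS2 hS3 ht).elim
            · exact hok
          · by_cases ha23 : oth e2 = oth e3
            · refine ⟨e1, e2, e3, h12, h13, h23, hIeq3, ha12, ?_⟩
              rcases hdich ⟨oth e1, hoth_ne e1⟩ ⟨oth e2, hoth_ne e2⟩ with ⟨S, hS1, hS2, ht⟩ | hok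
              · have hS3 : (⟨oth e3, hoth_ne e3⟩ : {u : V // u ≠ v}) ∈ S := by
                  rw [show (⟨oth e3, hoth_ne e3⟩ : {u : V // u ≠ v}) = ⟨oth e2, hoth_ne e2⟩
                    from Subtype.ext ha23.symm]
                  exact hS2
                exact (hno_tight S hS1 hS2 hS3 ht).elim
              · exact hok
            · rcases hdich ⟨oth e1, hoth_ne e1⟩ ⟨oth e2, hoth_ne e2⟩ with ⟨S12, hA1, hA2, ht12⟩ | hok12
              · rcases hdich ⟨oth e1, hoth_ne e1⟩ ⟨oth e3, hoth_ne e3⟩ with ⟨S13, hB1, hB3, ht13⟩ | hok13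
                · rcases hdich ⟨oth e2, hoth_ne e2⟩ ⟨oth e3, hoth_ne e3⟩ with ⟨S23, hC2, hC3, ht23⟩ | hok23
                  · exfalso
                    have hT1 := tight_union hG0 ht12 ht13
                      ⟨_, Finset.mem_inter.mpr ⟨hA1, hB1⟩⟩
                    have hT2 := tight_union hG0 hT1 ht23
                      ⟨_, Finset.mem_inter.mpr ⟨Finset.mem_union_left _ hA2, hC2⟩⟩
                    exact hno_tight _
                      (Finset.mem_union_left _ (Finset.mem_union_left _ hA1))
                      (Finset.mem_union_left _ (Finset.mem_union_left _ hA2))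
                      (Finset.mem_union_right _ hC3) hT2
                  · exact ⟨e2, e3, e1, h23, Ne.symm h12, Ne.symm h13, hIperm2, ha23, hok23⟩
                · exact ⟨e1, e3, e2, h13, h12, Ne.symm h23, hIperm1, ha13, hok13⟩
              · exact ⟨e1, e2, e3, h12, h13, h23, hIeq3, ha12, hok12⟩
      have haij' : (⟨oth i, hoth_ne i⟩ : {u : V // u ≠ v}) ≠ ⟨oth j, hoth_ne j⟩ :=
        fun h => haij (congrArg Subtype.val h)
      have hG2sparse : (addEdge (delVert G v)
          ⟨oth i, hoth_ne i⟩ ⟨oth j, hoth_ne j⟩ haij').IsSparse22 := by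
        intro S
        rw [edgeCount_addEdge]
        split_ifs with hmem
        · have h1 := hOK S hmem.1 hmem.2
          have hc1 : 1 ≤ S.card := Finset.card_pos.mpr ⟨_, hmem.1⟩
          omega
        · have h1 := hG0 S
          omega
      obtain ⟨d2, hd2⟩ := IH {u : V // u ≠ v} _ hcardV' _ hG2sparse
      set D : ℝ × ℝ := d2 (Sum.inr ()) with hD
      have hD0 : D ≠ 0 := by
        intro h0
        apply hd2.ne_zero (Sum.inr ())
        rw [← hD, h0, rowVec_zero]
      have hDsq : D.1 * D.1 + D.2 * D.2 ≠ 0 := fun h => hD0 (sq_pair_eq_zero h)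
      have hinci : inc G v i := (hmemI i).mp (by rw [hIeq]; simp)
      have hincj : inc G v j := (hmemI j).mp (by rw [hIeq]; simp)
      have hinck : inc G v k := (hmemI k).mp (by rw [hIeq]; simp)
      obtain ⟨d, hdi, hdj, hdk, hdnin⟩ :
          ∃ d : E → ℝ × ℝ, d i = ε i • D ∧ d j = ε j • (-D) ∧ d k = ε k • perp D ∧
            (∀ e (h : ¬ inc G v e), d e = d2 (Sum.inl ⟨e, h⟩)) := by
        refine ⟨fun e =>
          if h1 : e = i then ε i • D
          else if h2 : e = j then ε j • (-D)
          else if h3 : e = k then ε k • perp D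
          else if h4 : inc G v e then 0 else d2 (Sum.inl ⟨e, h4⟩), ?_, ?_, ?_, ?_⟩
        · simp
        · simp [Ne.symm hij]
        · simp [Ne.symm hik, Ne.symm hjk]
        · intro e h
          have hei : e ≠ i := fun hh => h (by rw [hh]; exact hinci)
          have hej : e ≠ j := fun hh => h (by rw [hh]; exact hincj)
          have hek : e ≠ k := fun hh => h (by rw [hh]; exact hinck)
          simp only [dif_neg hei, dif_neg hej, dif_neg hek]
          exact dif_neg h
      refine ⟨d, Fintype.linearIndependent_iff.mpr ?_⟩
      intro g hsum
      have h0 := hkey d g hsum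
      rw [hIeq, Finset.sum_insert (by simp [hij, hik]), Finset.sum_insert (by simp [hjk]),
        Finset.sum_singleton] at h0
      have hci : ε i • d i = D := by rw [hdi, hε_sq]
      have hcj : ε j • d j = -D := by rw [hdj, hε_sq]
      have hck : ε k • d k = perp D := by rw [hdk, hε_sq]
      rw [hci, hcj, hck] at h0
      have hc1 : (g i • perp D + (g j • perp (-D) + g k • perp (perp D))).1 = 0 := by
        rw [h0]; rfl
      have hc2 : (g i • perp D + (g j • perp (-D) + g k • perp (perp D))).2 = 0 := by
        rw [h0]; rfl
      simp only [perp, Prod.fst_add, Prod.snd_add, Prod.smul_fst, Prod.smul_snd,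
        Prod.fst_neg, Prod.snd_neg, smul_eq_mul, neg_neg] at hc1 hc2
      have hgk : g k = 0 := by
        have h4 : g k * (D.1 * D.1 + D.2 * D.2) = 0 := by
          linear_combination (-D.1) * hc1 + (-D.2) * hc2
        rcases mul_eq_zero.mp h4 with h | h
        · exact h
        · exact absurd h hDsq
      have hgij : g i = g j := by
        have h5 : (g i - g j) * (D.1 * D.1 + D.2 * D.2) = 0 := by
          linear_combination (-D.2) * hc1 + D.1 * hc2
        rcases mul_eq_zero.mp h5 with h | h
        · linarith [sub_eq_zero.mp h]
        · exact absurd h hDsq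
      -- restriction to the deleted-vertex coordinates
      have hρsum := congrArg ρ hsum
      rw [map_sum, map_zero] at hρsum
      simp_rw [map_smul] at hρsum
      rw [← Finset.sum_filter_add_sum_filter_not univ (fun e => inc G v e)] at hρsum
      have hfil : univ.filter (fun e => inc G v e) = ({i, j, k} : Finset E) := by
        rw [← hIeq, hI]
      rw [hfil, Finset.sum_insert (by simp [hij, hik]), Finset.sum_insert (by simp [hjk]),
        Finset.sum_singleton] at hρsum
      have hri : rowVec (G.ends i).1 (G.ends i).2 (d i) = rowVec v (oth i) D := by
        rw [hrow_canon i (d i) hinci, hci]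
      have hrj : rowVec (G.ends j).1 (G.ends j).2 (d j) = rowVec v (oth j) (-D) := by
        rw [hrow_canon j (d j) hincj, hcj]
      have hrk : rowVec (G.ends k).1 (G.ends k).2 (d k) = rowVec v (oth k) (perp D) := by
        rw [hrow_canon k (d k) hinck, hck]
      rw [hri, hrj, hrk] at hρsum
      have hpart2 : (∑ e ∈ univ.filter (fun e => ¬ inc G v e),
            g e • ρ (rowVec (G.ends e).1 (G.ends e).2 (d e)))
          = ∑ x : {e : E // ¬ inc G v e}, g x.1 •
              rowVec (((addEdge (delVert G v) ⟨oth i, hoth_ne i⟩ ⟨oth j, hoth_ne j⟩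
                  haij').ends (Sum.inl x)).1)
                (((addEdge (delVert G v) ⟨oth i, hoth_ne i⟩ ⟨oth j, hoth_ne j⟩
                  haij').ends (Sum.inl x)).2) (d2 (Sum.inl x)) := by
        have h1 : (∑ e ∈ univ.filter (fun e => ¬ inc G v e),
              g e • ρ (rowVec (G.ends e).1 (G.ends e).2 (d e)))
            = ∑ x : {e : E // ¬ inc G v e},
                g x.1 • ρ (rowVec (G.ends x.1).1 (G.ends x.1).2 (d x.1)) :=
          Finset.sum_subtype _ (fun e => by simp) _
        rw [h1]
        refine Finset.sum_congr rfl (fun x _ => ?_)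
        rw [hdnin x.1 x.2, hρ_rowVec _ _ (fun h => x.2 (Or.inl h)) (fun h => x.2 (Or.inr h))]
        rfl
      have hswap : g i • ρ (rowVec v (oth i) D) + (g j • ρ (rowVec v (oth j) (-D))
            + g k • ρ (rowVec v (oth k) (perp D)))
          = (-(g i)) • rowVec (⟨oth i, hoth_ne i⟩ : {u : V // u ≠ v}) ⟨oth j, hoth_ne j⟩ D := by
        rw [hgk, zero_smul, add_zero, ← hgij, ← smul_add, ← map_add, rowVec_add_sub,
          hρ_rowVec _ _ (hoth_ne j) (hoth_ne i),
          rowVec_swap (⟨oth j, hoth_ne j⟩ : {u : V // u ≠ v}) ⟨oth i, hoth_ne i⟩ D,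
          rowVec_neg, smul_neg, ← neg_smul]
      rw [hswap] at hρsum
      -- assemble the linear dependency for the augmented graph
      have hfinal : (∑ x : {e : E // ¬ inc G v e} ⊕ Unit,
            (Sum.elim (fun y : {e : E // ¬ inc G v e} => g y.1) (fun _ => -(g i)) x) •
              rowVec (((addEdge (delVert G v) ⟨oth i, hoth_ne i⟩ ⟨oth j, hoth_ne j⟩
                  haij').ends x).1)
                (((addEdge (delVert G v) ⟨oth i, hoth_ne i⟩ ⟨oth j, hoth_ne j⟩
                  haij').ends x).2) (d2 x)) = 0 := by
        rw [Fintype.sum_sum_type]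
        simp only [Sum.elim_inl, Sum.elim_inr]
        simp only [Finset.univ_unique, Finset.sum_singleton]
        rw [← hpart2]
        have hD' : d2 (Sum.inr (default : Unit)) = D := hD.symm
        rw [hD']
        rw [add_comm]
        exact hρsum
      have hall := Fintype.linearIndependent_iff.mp hd2
        (Sum.elim (fun y : {e : E // ¬ inc G v e} => g y.1) (fun _ => -(g i))) hfinal
      have hgi : g i = 0 := by
        have := hall (Sum.inr ())
        simp only [Sum.elim_inr, neg_eq_zero] at this
        exact this
      intro e
      by_cases h1 : e = i
      · rw [h1]; exact hgi
      by_cases h2 : e = j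
      · rw [h2, ← hgij]; exact hgi
      by_cases h3 : e = k
      · rw [h3]; exact hgk
      have hnin : ¬ inc G v e := by
        intro hi
        have : e ∈ I := (hmemI e).mpr hi
        rw [hIeq] at this
        simp only [Finset.mem_insert, Finset.mem_singleton] at this
        tauto
      exact hall (Sum.inl ⟨e, hnin⟩)

end DirNet


/-- The coefficient matrix with polynomial entries. -/
noncomputable def coeffPoly {V E : Type} [DecidableEq V] (G : MGraph V E) :
    Matrix E (V ⊕ V) (MvPolynomial (E ⊕ E) ℝ) := fun e col =>
  match col with
  | Sum.inl v =>
      if v = (G.ends e).1 then -X (Sum.inr e)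
      else if v = (G.ends e).2 then X (Sum.inr e) else 0
  | Sum.inr v =>
      if v = (G.ends e).1 then X (Sum.inl e)
      else if v = (G.ends e).2 then -X (Sum.inl e) else 0

lemma eval_coeffPoly {V E : Type} [DecidableEq V] (G : MGraph V E) (d : E → ℝ × ℝ)
    (e : E) (col : V ⊕ V) :
    eval (dirCoords d) (coeffPoly G e col) = coeffP G d e col := by
  rcases col with x | x
  · show eval (dirCoords d) (if x = (G.ends e).1 then -X (Sum.inr e)
        else if x = (G.ends e).2 then X (Sum.inr e) else 0)
      = (if x = (G.ends e).1 then -(d e).2 else if x = (G.ends e).2 then (d e).2 else 0)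
    split_ifs <;> simp [dirCoords]
  · show eval (dirCoords d) (if x = (G.ends e).1 then X (Sum.inl e)
        else if x = (G.ends e).2 then -X (Sum.inl e) else 0)
      = (if x = (G.ends e).1 then (d e).1 else if x = (G.ends e).2 then -(d e).1 else 0)
    split_ifs <;> simp [dirCoords]


/-- **Genericity of full rank for the realization system of a `(2,2)`-sparse graph.**
The full-rank locus is the complement of the common zero set of finitely many nonzero
polynomials, and it is open and dense. -/
theorem fullRank_locus_is_generic
    {V E : Type} [Fintype V] [Fintype E] [DecidableEq V]
    (G : MGraph V E) (hsparse : G.IsSparse22) :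
    ∃ polys : Finset (MvPolynomial (E ⊕ E) ℝ),
      (∀ f ∈ polys, f ≠ 0) ∧
      {d : E → ℝ × ℝ | (coeffP G d).rank = Fintype.card E} =
        {d : E → ℝ × ℝ | ∃ f ∈ polys, eval (dirCoords d) f ≠ 0} ∧
      IsOpen {d : E → ℝ × ℝ | (coeffP G d).rank = Fintype.card E} ∧
      Dense {d : E → ℝ × ℝ | (coeffP G d).rank = Fintype.card E} := by
  classical
  obtain ⟨d₀, hd₀⟩ := DirNet.exists_good_dir (Fintype.card V) V E le_rfl G hsparse
  have hrows : ∀ (d : E → ℝ × ℝ), (fun e => coeffP G d e)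
      = fun e => DirNet.rowVec (G.ends e).1 (G.ends e).2 (d e) := fun d =>
    funext (fun e => DirNet.coeffP_eq_rowVec G d e)
  have hd₀' : LinearIndependent ℝ (fun e => coeffP G d₀ e) := by
    rw [hrows]; exact hd₀
  set detP : (E → V ⊕ V) → MvPolynomial (E ⊕ E) ℝ :=
    fun c => ((coeffPoly G).submatrix id c).det with hdetP
  have heval : ∀ (d : E → ℝ × ℝ) (c : E → V ⊕ V),
      eval (dirCoords d) (detP c) = ((coeffP G d).submatrix id c).det := by
    intro d c
    rw [hdetP]
    rw [RingHom.map_det]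
    congr 1
    ext e e'
    simp [Matrix.submatrix_apply, Matrix.map_apply, eval_coeffPoly]
  have hmem : ∀ d : E → ℝ × ℝ, (coeffP G d).rank = Fintype.card E ↔
      ∃ c : E → V ⊕ V, ((coeffP G d).submatrix id c).det ≠ 0 := by
    intro d
    rw [rank_eq_card_iff_rows]
    constructor
    · exact exists_det_ne_zero_of_linearIndependent
    · rintro ⟨c, hc⟩
      exact linearIndependent_of_det_ne_zero hc
  set polys : Finset (MvPolynomial (E ⊕ E) ℝ) :=
    (Finset.univ.image detP).filter (fun f => f ≠ 0) with hpolys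
  have hpolys_ne : ∀ f ∈ polys, f ≠ 0 := fun f hf => (Finset.mem_filter.mp hf).2
  have hseteq : {d : E → ℝ × ℝ | (coeffP G d).rank = Fintype.card E} =
      {d : E → ℝ × ℝ | ∃ f ∈ polys, eval (dirCoords d) f ≠ 0} := by
    ext d
    simp only [Set.mem_setOf_eq, hmem d]
    constructor
    · rintro ⟨c, hc⟩
      refine ⟨detP c, ?_, ?_⟩
      · rw [hpolys, Finset.mem_filter]
        refine ⟨Finset.mem_image_of_mem _ (Finset.mem_univ c), ?_⟩
        intro h0
        exact hc (by rw [← heval d c, h0, map_zero])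
      · rw [heval]; exact hc
    · rintro ⟨f, hf, hev⟩
      obtain ⟨c, _, rfl⟩ := Finset.mem_image.mp (Finset.mem_filter.mp hf).1
      exact ⟨c, by rw [← heval]; exact hev⟩
  refine ⟨polys, hpolys_ne, hseteq, ?_, ?_⟩
  · rw [hseteq]
    have hU : {d : E → ℝ × ℝ | ∃ f ∈ polys, eval (dirCoords d) f ≠ 0}
        = ⋃ f ∈ polys, {d : E → ℝ × ℝ | eval (dirCoords d) f ≠ 0} := by
      ext d; simp
    rw [hU]
    refine isOpen_biUnion fun f _ => ?_
    have hcont : Continuous fun d : E → ℝ × ℝ => eval (dirCoords d) f := by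
      show Continuous ((fun x : (E ⊕ E) → ℝ => eval x f) ∘ dirCoords)
      exact (MvPolynomial.continuous_eval f).comp (dirHomeo E).continuous_toFun
    exact IsOpen.preimage hcont isOpen_ne
  · rw [hseteq]
    obtain ⟨c₀, hc₀⟩ := exists_det_ne_zero_of_linearIndependent hd₀'
    have hg_ne : detP c₀ ≠ 0 := fun h0 => hc₀ (by rw [← heval d₀ c₀, h0, map_zero])
    have hginpolys : detP c₀ ∈ polys := by
      rw [hpolys, Finset.mem_filter]
      exact ⟨Finset.mem_image_of_mem _ (Finset.mem_univ c₀), hg_ne⟩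
    have hdense0 : Dense {x : (E ⊕ E) → ℝ | eval x (detP c₀) ≠ 0} :=
      dense_eval_ne_zero hg_ne
    have hdense1 : Dense ((dirHomeo E) ⁻¹' {x : (E ⊕ E) → ℝ | eval x (detP c₀) ≠ 0}) :=
      hdense0.preimage (dirHomeo E).isOpenMap
    refine hdense1.mono (fun d hd => ⟨detP c₀, hginpolys, hd⟩)
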